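/- Let u be the mixture of two point masses: u(n) = w₁ if n = N₁, u(n) = w₂ if n = N₂, and u(n) = 0 otherwise, where w₁, w₂ ∈ (0,1) with w₁ + w₂ = 1 and N₁ < N₂ are natural numbers. Then S(N₁) < 0 if and only if w₁·N₂ > (w₁ + 1)·N₁ + 1 (equivalently N₂ > ((w₁+1)·N₁ + 1)/w₁); i.e., sharp restart at N₁ + 1 is beneficial exactly when the two point masses are sufficiently far apart. -/
import Mathlib


theorem two_point_masses_beneficial_iff
    (w₁ w₂ : ℝ) (hw₁ : w₁ ∈ Set.Ioo (0 : ℝ) 1) (hw₂ : w₂ ∈ Set.Ioo (0 : ℝ) 1)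
    (hw : w₁ + w₂ = 1)
    (N₁ N₂ : ℕ) (hN : N₁ < N₂)
    (u : ℕ → ℝ)
    (hu : ∀ n, u n = if n = N₁ then w₁ else if n = N₂ then w₂ else 0)
    (μ : ℝ) (hμ : μ = ∑' n : ℕ, (n : ℝ) * u n)
    (U S : ℕ → ℝ)
    (hU : ∀ n, U n = ∑ k ∈ Finset.range (n + 1), u k)
    (hS : ∀ n, S n = ∑ k ∈ Finset.range (n + 1), (1 - U k - u k * μ)) :
    S N₁ < 0 ↔ (w₁ + 1) * N₁ + 1 < w₁ * N₂ := by
  have hne : N₁ ≠ N₂ := hN.ne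
  -- compute μ
  have hμ' : μ = N₁ * w₁ + N₂ * w₂ := by
    rw [hμ, tsum_eq_sum (s := {N₁, N₂}) (by
      intro n hn
      simp only [Finset.mem_insert, Finset.mem_singleton, not_or] at hn
      rw [hu]
      simp [hn.1, hn.2])]
    rw [Finset.sum_pair hne, hu N₁, hu N₂]
    simp [hne.symm]
  -- sum of u over range (N₁+1)
  have hsumu : ∀ k, k ≤ N₁ → U k = if k = N₁ then w₁ else 0 := by
    intro k hk
    rw [hU]
    by_cases h : k = N₁
    · subst h
      simp only [if_pos rfl]
      rw [Finset.sum_eq_single k]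
      · rw [hu]; simp
      · intro j hj hjne
        rw [hu]
        have : j ≠ N₂ := by
          intro h'; subst h'
          exact absurd (Finset.mem_range.mp hj) (by omega)
        simp [hjne, this]
      · intro h; exact absurd (Finset.self_mem_range_succ k) h
    · simp only [if_neg h]
      apply Finset.sum_eq_zero
      intro j hj
      have hj' := Finset.mem_range.mp hj
      rw [hu]
      have h1 : j ≠ N₁ := by omega
      have h2 : j ≠ N₂ := by omega
      simp [h1, h2]
  have hS' : S N₁ = (N₁ + 1 : ℝ) - w₁ - w₁ * μ := by
    rw [hS]
    have : ∀ k ∈ Finset.range (N₁ + 1),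
        (1 - U k - u k * μ) = 1 - (if k = N₁ then w₁ else 0)
          - (if k = N₁ then w₁ else 0) * μ := by
      intro k hk
      have hk' : k ≤ N₁ := Nat.lt_succ_iff.mp (Finset.mem_range.mp hk)
      have hk2 : k ≠ N₂ := by omega
      rw [hsumu k hk', hu k]; by_cases h : k = N₁ <;> simp [h, hk2]
    rw [Finset.sum_congr rfl this]
    rw [Finset.sum_sub_distrib, Finset.sum_sub_distrib]
    simp [Finset.sum_ite_eq', Finset.self_mem_range_succ]
  rw [hS', hμ']
  have hw₂' : w₂ = 1 - w₁ := by linarith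
  subst hw₂'
  have h1 : (0:ℝ) < w₁ := hw₁.1
  have h2 : w₁ < 1 := hw₁.2
  constructor
  · intro h
    nlinarith [mul_pos (sub_pos.2 h2) h1, (Nat.cast_le (α := ℝ)).2 hN.le, (Nat.cast_lt (α := ℝ)).2 hN]
  · intro h
    nlinarith [mul_pos (sub_pos.2 h2) h1, (Nat.cast_lt (α := ℝ)).2 hN]
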